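/- arXiv:1103.2796 — 7 statements merged into one kernel-verified Lean document; each statement's English description precedes it below -/
import Mathlib

section
/- Let η be a Radon measure on ℝ such that for every Borel set A with η(A) > 0 one has ∫_{0}^{∞} η(A + t) dt > 0 (equivalently, (η ⊗ L¹)({(x,t) : t ≥ 0, x − t ∈ A}) > 0). Then η is absolutely continuous with respect to Lebesgue measure L¹. -/
open MeasureTheory
open scoped ENNReal

/-- If η is a Radon (locally finite Borel) measure on ℝ such that every Borel set `A`
with `η A > 0` satisfies `∫_{0}^{∞} η (A + t) dt > 0`, then `η` is absolutely continuous
with respect to Lebesgue measure. Here `A + t = {x | x - t ∈ A}` is the translate. -/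
theorem stmt1 (η : Measure ℝ) [IsLocallyFiniteMeasure η]
    (h : ∀ A : Set ℝ, MeasurableSet A → 0 < η A →
      0 < ∫⁻ t in Set.Ioi (0 : ℝ), η {x | x - t ∈ A}) :
    η ≪ (volume : Measure ℝ) := by
  intro s hs
  set A := toMeasurable volume s with hAdef
  have hAm : MeasurableSet A := measurableSet_toMeasurable _ _
  have hAvol : volume A = 0 := by rwa [measure_toMeasurable]
  have key : η A = 0 := by
    by_contra hne
    have hpos : 0 < η A := pos_iff_ne_zero.mpr hne
    have h0 := h A hAm hpos
    have hf : Measurable (Function.uncurry fun (t x : ℝ) => A.indicator (1 : ℝ → ℝ≥0∞) (x - t)) := by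
      apply Measurable.indicator measurable_const
      exact (measurable_snd.sub measurable_fst) hAm
    have heq : ∀ t : ℝ, η {x | x - t ∈ A} = ∫⁻ x, A.indicator 1 (x - t) ∂η := by
      intro t
      have : {x : ℝ | x - t ∈ A} = (fun x => x - t) ⁻¹' A := rfl
      rw [this, ← lintegral_indicator_one (measurable_sub_const t hAm)]
      congr 1
    have hfull : ∫⁻ t, η {x | x - t ∈ A} = 0 := by
      have hswap : ∫⁻ t, ∫⁻ x, A.indicator (1 : ℝ → ℝ≥0∞) (x - t) ∂η ∂volume
          = ∫⁻ x, ∫⁻ t, A.indicator (1 : ℝ → ℝ≥0∞) (x - t) ∂volume ∂η :=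
        lintegral_lintegral_swap hf.aemeasurable
      have hinner : ∀ x : ℝ, ∫⁻ t, A.indicator (1 : ℝ → ℝ≥0∞) (x - t) ∂volume = 0 := by
        intro x
        have hmp : MeasurePreserving (fun t : ℝ => x - t) volume volume :=
          Measure.measurePreserving_sub_left volume x
        have : ∫⁻ t, A.indicator (1 : ℝ → ℝ≥0∞) (x - t) ∂volume
            = ∫⁻ y, A.indicator (1 : ℝ → ℝ≥0∞) y ∂volume :=
          hmp.lintegral_comp (measurable_const.indicator hAm)
        rw [this, lintegral_indicator_one hAm, hAvol]
      calc ∫⁻ t, η {x | x - t ∈ A}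
          = ∫⁻ t, ∫⁻ x, A.indicator (1 : ℝ → ℝ≥0∞) (x - t) ∂η ∂volume := by
            simp only [heq]
        _ = ∫⁻ x, ∫⁻ t, A.indicator (1 : ℝ → ℝ≥0∞) (x - t) ∂volume ∂η := hswap
        _ = 0 := by simp [hinner]
    have hle : ∫⁻ t in Set.Ioi (0 : ℝ), η {x | x - t ∈ A} ≤ ∫⁻ t, η {x | x - t ∈ A} :=
      lintegral_mono' Measure.restrict_le_self le_rfl
    rw [hfull] at hle
    exact absurd (le_antisymm hle zero_le) (ne_of_gt h0)
  exact le_antisymm (le_trans (measure_mono (subset_toMeasurable _ _)) key.le) zero_le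
end

section
/- Let μ, ν be Borel probability measures on ℝ with μ continuous (atomless), and let H(s) = μ((−∞, s)), F(t) = ν((−∞, t)) be their left-continuous distribution functions. Then the nondecreasing map T(s) = sup{t ∈ ℝ : F(t) ≤ H(s)} pushes μ forward to ν: T_♯ μ = ν. -/
open MeasureTheory

namespace Stmt7Aux

open Set
open scoped ENNReal

variable {ρ : Measure ℝ}


variable {ρ : Measure ℝ}

lemma Iio_eq_iUnion (a : ℝ) : Iio a = ⋃ n : ℕ, Iio (a - 1/(n+1)) := by
  ext t
  simp only [mem_Iio, mem_iUnion]
  constructor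
  · intro h
    obtain ⟨n, hn⟩ := exists_nat_one_div_lt (sub_pos.2 h)
    exact ⟨n, by linarith⟩
  · rintro ⟨n, hn⟩
    have : (0:ℝ) < 1/(n+1) := by positivity
    linarith

lemma Iic_eq_iInter (x : ℝ) : Iic x = ⋂ n : ℕ, Iio (x + 1/(n+1)) := by
  ext t
  simp only [mem_Iic, mem_iInter, mem_Iio]
  constructor
  · intro h n
    have : (0:ℝ) < 1/(n+1) := by positivity
    linarith
  · intro h
    by_contra hx
    push_neg at hx
    obtain ⟨n, hn⟩ := exists_nat_one_div_lt (sub_pos.2 hx)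
    have := h n
    linarith

lemma aux_Iio_le {a : ℝ} {c : ℝ≥0∞} (h : ∀ s, s < a → ρ (Iio s) ≤ c) :
    ρ (Iio a) ≤ c := by
  rw [Iio_eq_iUnion a]
  have hmono : Monotone (fun n : ℕ => Iio (a - 1/(n+1))) := by
    intro n m hnm
    apply Iio_subset_Iio
    have h1 : (1:ℝ)/(m+1) ≤ 1/(n+1) := by
      apply one_div_le_one_div_of_le (by positivity)
      have : (n:ℝ) ≤ (m:ℝ) := by exact_mod_cast hnm
      linarith
    linarith
  rw [hmono.measure_iUnion]
  refine iSup_le fun n => h _ ?_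
  have : (0:ℝ) < 1/(n+1) := by positivity
  linarith

lemma aux_le_Iic [IsFiniteMeasure ρ] {x : ℝ} {c : ℝ≥0∞}
    (h : ∀ t, x < t → c ≤ ρ (Iio t)) : c ≤ ρ (Iic x) := by
  rw [Iic_eq_iInter x]
  have hanti : Antitone (fun n : ℕ => Iio (x + 1/(n+1))) := by
    intro n m hnm
    apply Iio_subset_Iio
    have h1 : (1:ℝ)/(m+1) ≤ 1/(n+1) := by
      apply one_div_le_one_div_of_le (by positivity)
      have : (n:ℝ) ≤ (m:ℝ) := by exact_mod_cast hnm
      linarith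
    linarith
  rw [hanti.measure_iInter (fun n => measurableSet_Iio.nullMeasurableSet)
    ⟨0, measure_ne_top _ _⟩]
  refine le_iInf fun n => h _ ?_
  have : (0:ℝ) < 1/(n+1) := by positivity
  linarith

lemma aux_le_zero [IsFiniteMeasure ρ] {c : ℝ≥0∞} (h : ∀ t, c ≤ ρ (Iio t)) : c = 0 := by
  have hanti : Antitone (fun n : ℕ => Iio (-(n:ℝ))) := by
    intro n m hnm
    apply Iio_subset_Iio
    simp only [neg_le_neg_iff]
    exact_mod_cast hnm
  have hempty : (⋂ n : ℕ, Iio (-(n:ℝ))) = ∅ := by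
    ext t
    simp only [mem_iInter, mem_Iio, mem_empty_iff_false, iff_false, not_forall, not_lt]
    obtain ⟨n, hn⟩ := exists_nat_ge (-t)
    exact ⟨n, by linarith⟩
  have := hanti.measure_iInter (μ := ρ) (fun n => measurableSet_Iio.nullMeasurableSet)
    ⟨0, measure_ne_top _ _⟩
  rw [hempty, measure_empty] at this
  have h0 : c ≤ 0 := this ▸ le_iInf fun n => h _
  exact le_antisymm h0 (zero_le)

lemma aux_univ_le {c : ℝ≥0∞} (h : ∀ t, ρ (Iio t) ≤ c) : ρ univ ≤ c := by
  have hmono : Monotone (fun n : ℕ => Iio ((n:ℝ))) := by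
    intro n m hnm
    exact Iio_subset_Iio (by exact_mod_cast hnm)
  have huniv : (⋃ n : ℕ, Iio ((n:ℝ))) = univ := by
    ext t
    simp only [mem_iUnion, mem_Iio, mem_univ, iff_true]
    exact exists_nat_gt t
  rw [← huniv, hmono.measure_iUnion]
  exact iSup_le fun n => h _


lemma unif_le (μ : Measure ℝ) [IsProbabilityMeasure μ] [NullSingletonClass μ] (c : ℝ≥0∞) :
    μ {s : ℝ | μ (Iio s) ≤ c} ≤ c := by
  set A := {s : ℝ | μ (Iio s) ≤ c} with hA
  rcases eq_empty_or_nonempty A with h | hne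
  · rw [h]; simp
  by_cases hbdd : BddAbove A
  · set a := sSup A with ha
    have hsub : A ⊆ Iic a := fun s hs => le_csSup hbdd hs
    calc μ A ≤ μ (Iic a) := measure_mono hsub
      _ = μ (Iio a) := (measure_congr Iio_ae_eq_Iic).symm
      _ ≤ c := by
        apply aux_Iio_le
        intro s hs
        obtain ⟨s', hs'A, hss'⟩ := exists_lt_of_lt_csSup hne hs
        exact le_trans (measure_mono (Iio_subset_Iio hss'.le)) hs'A
  · -- A unbounded above: every s has H s ≤ c
    have hall : ∀ s : ℝ, μ (Iio s) ≤ c := by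
      intro s
      rcases not_bddAbove_iff.1 hbdd s with ⟨s', hs'A, hss'⟩
      exact le_trans (measure_mono (Iio_subset_Iio hss'.le)) hs'A
    calc μ A ≤ μ univ := measure_mono (subset_univ _)
      _ ≤ c := aux_univ_le hall

lemma unif_ge (μ : Measure ℝ) [IsProbabilityMeasure μ] [NullSingletonClass μ] {c : ℝ≥0∞}
    (hc : c ≤ 1) : c ≤ μ {s : ℝ | μ (Iio s) < c} := by
  set B := {s : ℝ | c ≤ μ (Iio s)} with hB
  rcases eq_empty_or_nonempty B with h | hne
  · have : {s : ℝ | μ (Iio s) < c} = univ := by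
      ext s
      simp only [mem_setOf_eq, mem_univ, iff_true]
      by_contra hs
      exact absurd (hB ▸ (mem_setOf_eq ▸ not_lt.1 hs) : s ∈ B) (h ▸ notMem_empty s)
    rw [this, measure_univ]
    exact hc
  by_cases hbdd : BddBelow B
  · set b := sInf B with hb
    have hsub : Iio b ⊆ {s : ℝ | μ (Iio s) < c} := by
      intro s hs
      simp only [mem_setOf_eq]
      by_contra h
      exact absurd (csInf_le hbdd (not_lt.1 h : c ≤ μ (Iio s))) (not_le.2 hs)
    have hbc : c ≤ μ (Iio b) := by
      have h1 : c ≤ μ (Iic b) := by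
        apply aux_le_Iic
        intro t ht
        obtain ⟨s', hs'B, hs't⟩ := exists_lt_of_csInf_lt hne ht
        exact le_trans hs'B (measure_mono (Iio_subset_Iio hs't.le))
      rwa [← measure_congr Iio_ae_eq_Iic] at h1
    exact le_trans hbc (measure_mono hsub)
  · -- B unbounded below: c ≤ H s for all s, so c = 0
    have hall : ∀ s : ℝ, c ≤ μ (Iio s) := by
      intro s
      rcases not_bddBelow_iff.1 hbdd s with ⟨s', hs'B, hs's⟩
      exact le_trans hs'B (measure_mono (Iio_subset_Iio hs's.le))
    rw [aux_le_zero hall]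
    exact zero_le


end Stmt7Aux

open Set Stmt7Aux
open scoped ENNReal

/-- Monotone rearrangement on ℝ: if `μ`, `ν` are Borel probability measures on ℝ with `μ`
atomless, the nondecreasing map `T(s) = sup {t : ν((-∞,t)) ≤ μ((-∞,s))}` pushes `μ`
forward to `ν`. -/
theorem stmt7 (μ ν : Measure ℝ) [IsProbabilityMeasure μ] [IsProbabilityMeasure ν]
    [NullSingletonClass μ]
    (T : ℝ → ℝ)
    (hT : ∀ s, T s = sSup {t : ℝ | ν (Set.Iio t) ≤ μ (Set.Iio s)}) :
    Measure.map T μ = ν := by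
  classical
  set H : ℝ → ℝ≥0∞ := fun s => μ (Iio s) with hHdef
  set F : ℝ → ℝ≥0∞ := fun t => ν (Iio t) with hFdef
  set g : ℝ≥0∞ → ℝ := fun a => sSup {t : ℝ | F t ≤ a} with hgdef
  have hTg : ∀ s, T s = g (H s) := fun s => hT s
  have hHmono : Monotone H := fun s s' hss' => measure_mono (Iio_subset_Iio hss')
  have hFmono : Monotone F := fun t t' htt' => measure_mono (Iio_subset_Iio htt')
  have hHmeas : Measurable H := hHmono.measurable
  have hH1 : ∀ s, H s ≤ 1 := fun s => prob_le_one
  -- nonemptiness and boundedness of the sets defining g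
  have h_ne : ∀ {a : ℝ≥0∞}, 0 < a → {t : ℝ | F t ≤ a}.Nonempty := by
    intro a ha
    by_contra h
    rw [not_nonempty_iff_eq_empty] at h
    have hall : ∀ t, a ≤ F t := by
      intro t
      by_contra ht
      exact absurd (h ▸ (not_le.1 ht).le : t ∈ ({} : Set ℝ)) (notMem_empty t)
    exact absurd (aux_le_zero (ρ := ν) hall) ha.ne'
  have h_bdd : ∀ {a : ℝ≥0∞}, a < 1 → BddAbove {t : ℝ | F t ≤ a} := by
    intro a ha
    by_contra h
    have hall : ∀ t, F t ≤ a := by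
      intro t
      rcases not_bddAbove_iff.1 h t with ⟨t', ht', htt'⟩
      exact le_trans (hFmono htt'.le) ht'
    have : ν univ ≤ a := aux_univ_le hall
    rw [measure_univ] at this
    exact absurd this (not_le.2 ha)
  have g_mono : ∀ {a a' : ℝ≥0∞}, 0 < a → a' < 1 → a ≤ a' → g a ≤ g a' := by
    intro a a' ha ha' haa'
    exact csSup_le_csSup (h_bdd ha') (h_ne ha) (fun t ht => le_trans ht haa')
  -- key equivalence
  have E1 : ∀ {a : ℝ≥0∞}, 0 < a → a < 1 → ∀ x : ℝ,
      (g a ≤ x ↔ ∀ t, x < t → a < F t) := by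
    intro a ha ha' x
    constructor
    · intro hg t hxt
      by_contra h
      have htS : t ∈ {t : ℝ | F t ≤ a} := not_lt.1 h
      have := le_csSup (h_bdd ha') htS
      exact absurd (lt_of_lt_of_le hxt (le_trans this hg)) (lt_irrefl x)
    · intro h
      apply csSup_le (h_ne ha)
      intro t ht
      by_contra hxt
      exact absurd ht (not_le.2 (h t (not_le.1 hxt)))
  -- measurability of T
  have hTmeas : Measurable T := by
    have : T = (fun a => g a) ∘ H := by
      ext s; exact hTg s
    rw [this]
    apply Measurable.comp _ hHmeas
    apply measurable_of_Iic
    intro x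
    -- the preimage {a | g a ≤ x}
    set D := {a : ℝ≥0∞ | g a ≤ x} with hD
    have hg_const : ∀ a : ℝ≥0∞, 1 ≤ a → g a = g 1 := by
      intro a ha
      have : {t : ℝ | F t ≤ a} = {t : ℝ | F t ≤ 1} := by
        ext t
        simp only [mem_setOf_eq]
        exact ⟨fun _ => prob_le_one, fun h => le_trans h ha⟩
      simp only [hgdef]
      rw [this]
    have hsplit : (fun a => g a) ⁻¹' Iic x
        = (D ∩ Ioo 0 1) ∪ (D ∩ {0}) ∪ (Ici 1 ∩ {a : ℝ≥0∞ | g 1 ≤ x}) := by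
      ext a
      simp only [mem_preimage, mem_Iic, mem_union, mem_inter_iff, mem_Ioo, mem_Ici,
        mem_setOf_eq, mem_singleton_iff, hD]
      constructor
      · intro hga
        rcases eq_or_lt_of_le (zero_le (a := a)) with h0 | h0
        · exact Or.inl (Or.inr ⟨hga, h0.symm⟩)
        rcases lt_or_ge a 1 with h1 | h1
        · exact Or.inl (Or.inl ⟨hga, h0, h1⟩)
        · exact Or.inr ⟨h1, (hg_const a h1) ▸ hga⟩
      · rintro ((⟨h, _⟩ | ⟨h, _⟩) | ⟨h1, h⟩)
        · exact h
        · exact h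
        · rw [hg_const a h1]; exact h
    rw [hsplit]
    apply MeasurableSet.union
    apply MeasurableSet.union
    · -- ord connected
      apply Set.OrdConnected.measurableSet
      constructor
      intro a1 ha1 a2 ha2 b hb
      refine ⟨?_, lt_of_lt_of_le ha1.2.1 hb.1, lt_of_le_of_lt hb.2 ha2.2.2⟩
      exact le_trans (g_mono (lt_of_lt_of_le ha1.2.1 hb.1) ha2.2.2 hb.2) ha2.1
    · exact (Set.Subsingleton.measurableSet (fun a ha b hb =>
        ha.2.trans hb.2.symm))
    · exact (measurableSet_Ici.inter (MeasurableSet.const _))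
  -- main computation
  have hmap : IsProbabilityMeasure (Measure.map T μ) :=
    Measure.isProbabilityMeasure_map hTmeas.aemeasurable
  apply Measure.ext_of_Iic
  intro x
  rw [Measure.map_apply hTmeas measurableSet_Iic]
  set c := ν (Iic x) with hc
  have hc1 : c ≤ 1 := prob_le_one
  -- upper bound
  have hupper : T ⁻¹' Iic x ⊆ {s : ℝ | H s ≤ c} ∪ {s : ℝ | H s = 0} ∪ {s : ℝ | 1 ≤ H s} := by
    intro s hs
    simp only [mem_preimage, mem_Iic] at hs
    rcases eq_or_lt_of_le (zero_le (a := H s)) with h0 | h0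
    · exact Or.inl (Or.inr h0.symm)
    rcases lt_or_ge (H s) 1 with h1 | h1
    · refine Or.inl (Or.inl ?_)
      rw [hTg s] at hs
      have hkey := (E1 h0 h1 x).1 hs
      simp only [mem_setOf_eq, hc]
      apply aux_le_Iic
      intro t ht
      exact (hkey t ht).le
    · exact Or.inr h1
  have hnull0 : μ {s : ℝ | H s = 0} = 0 := by
    have hsub : {s : ℝ | H s = 0} ⊆ {s : ℝ | μ (Iio s) ≤ 0} := fun s hs => hs.le
    exact le_antisymm (le_trans (measure_mono hsub) (unif_le μ 0)) (zero_le)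
  have hnull1 : μ {s : ℝ | 1 ≤ H s} = 0 := by
    have heq : {s : ℝ | 1 ≤ H s} = {s : ℝ | μ (Iio s) < 1}ᶜ := by
      ext s
      simp only [mem_setOf_eq, mem_compl_iff, not_lt, hHdef]
    have hm : MeasurableSet {s : ℝ | μ (Iio s) < (1:ℝ≥0∞)} :=
      hHmeas measurableSet_Iio
    have h1 : μ {s : ℝ | μ (Iio s) < 1} = 1 :=
      le_antisymm prob_le_one (unif_ge μ le_rfl)
    rw [heq, measure_compl hm (measure_ne_top _ _), h1, measure_univ]
    simp
  have hub : μ (T ⁻¹' Iic x) ≤ c := by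
    calc μ (T ⁻¹' Iic x)
        ≤ μ ({s : ℝ | H s ≤ c} ∪ {s : ℝ | H s = 0} ∪ {s : ℝ | 1 ≤ H s}) :=
          measure_mono hupper
      _ ≤ μ ({s : ℝ | H s ≤ c} ∪ {s : ℝ | H s = 0}) + μ {s : ℝ | 1 ≤ H s} :=
          measure_union_le _ _
      _ ≤ μ {s : ℝ | H s ≤ c} + μ {s : ℝ | H s = 0} + μ {s : ℝ | 1 ≤ H s} := by
          gcongr; exact measure_union_le _ _
      _ ≤ c + 0 + 0 := by
          gcongr
          · exact unif_le μ c
          · exact hnull0.le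
          · exact hnull1.le
      _ = c := by simp
  -- lower bound
  have hlower : {s : ℝ | H s < c} ⊆ T ⁻¹' Iic x ∪ {s : ℝ | H s = 0} := by
    intro s hs
    simp only [mem_setOf_eq] at hs
    rcases eq_or_lt_of_le (zero_le (a := H s)) with h0 | h0
    · exact Or.inr h0.symm
    refine Or.inl ?_
    simp only [mem_preimage, mem_Iic, hTg s]
    have h1 : H s < 1 := lt_of_lt_of_le hs hc1
    refine (E1 h0 h1 x).2 ?_
    intro t ht
    calc H s < c := hs
      _ ≤ F t := measure_mono (fun y hy => lt_of_le_of_lt hy ht)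
  have hlb : c ≤ μ (T ⁻¹' Iic x) := by
    calc c ≤ μ {s : ℝ | H s < c} := unif_ge μ hc1
      _ ≤ μ (T ⁻¹' Iic x ∪ {s : ℝ | H s = 0}) := measure_mono hlower
      _ ≤ μ (T ⁻¹' Iic x) + μ {s : ℝ | H s = 0} := measure_union_le _ _
      _ = μ (T ⁻¹' Iic x) := by rw [hnull0, add_zero]
  exact le_antisymm hub hlb
end

section
/- Let Y be a Polish space, ξ_n a sequence of Borel probability measures on Y converging weakly to ξ, and r_n ∈ L¹(ξ_n) nonnegative functions with r_n ξ_n converging weakly to a measure ζ. Assume the uniform integrability condition: for every ε > 0 there is δ > 0 such that for all n and all Borel A, ξ_n(A) < δ implies ∫_A r_n dξ_n < ε. Then ζ is absolutely continuous with respect to ξ, i.e. ζ = r ξ for some r ∈ L¹(ξ). -/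
open MeasureTheory Filter
open scoped ENNReal BoundedContinuousFunction

/-- Stability of absolute continuity: if `ξₙ → ξ` weakly on a Polish space, `rₙ ≥ 0` are
`L¹(ξₙ)` densities with `rₙ ξₙ → ζ` weakly, and the `rₙ` are uniformly integrable
(`ξₙ A < δ ⟹ ∫_A rₙ dξₙ < ε`), then `ζ ≪ ξ`, i.e. `ζ = r ξ` for some `r ∈ L¹(ξ)`. -/
theorem stmt9 {Y : Type*} [TopologicalSpace Y] [PolishSpace Y]
    [MeasurableSpace Y] [BorelSpace Y]
    (ξn : ℕ → Measure Y) (ξ : Measure Y)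
    [∀ n, IsProbabilityMeasure (ξn n)] [IsProbabilityMeasure ξ]
    (hweak : ∀ f : Y →ᵇ ℝ,
      Tendsto (fun n => ∫ y, f y ∂(ξn n)) atTop (nhds (∫ y, f y ∂ξ)))
    (r : ℕ → Y → ℝ) (hrpos : ∀ n y, 0 ≤ r n y)
    (hrint : ∀ n, Integrable (r n) (ξn n))
    (ζ : Measure Y) [IsFiniteMeasure ζ]
    (hζweak : ∀ f : Y →ᵇ ℝ,
      Tendsto (fun n => ∫ y, f y * r n y ∂(ξn n)) atTop (nhds (∫ y, f y ∂ζ)))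
    (hequi : ∀ ε : ℝ, 0 < ε → ∃ δ : ℝ, 0 < δ ∧ ∀ n, ∀ A : Set Y, MeasurableSet A →
      ξn n A < ENNReal.ofReal δ → ∫ y in A, r n y ∂(ξn n) < ε) :
    ζ ≪ ξ ∧ ∃ ρ : Y → ℝ≥0∞, Measurable ρ ∧ ζ = ξ.withDensity ρ := by
  haveI : NormalSpace Y := by letI := TopologicalSpace.upgradeIsCompletelyMetrizable Y; infer_instance
  have hac : ζ ≪ ξ := by
    intro A hA0
    have key : ∀ ε : ℝ, 0 < ε → ζ A ≤ ENNReal.ofReal ε := by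
      intro ε hε
      obtain ⟨δ, hδ, hδε⟩ := hequi ε hε
      obtain ⟨U, hAU, hUopen, hUδ⟩ := Set.exists_isOpen_lt_of_lt (μ := ξ) A (ENNReal.ofReal δ)
        (by rw [hA0]; exact ENNReal.ofReal_pos.mpr hδ)
      -- every closed subset of `U` has small `ζ`-measure
      have main : ∀ F' : Set Y, IsClosed F' → F' ⊆ U → ζ F' ≤ ENNReal.ofReal ε := by
        intro F' hF'c hF'U
        have hdisj : Disjoint Uᶜ F' := Set.disjoint_left.mpr fun x hxc hxF => hxc (hF'U hxF)
        obtain ⟨g, hg0, hg1, hg01⟩ :=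
          exists_bounded_zero_one_of_closed (isClosed_compl_iff.mpr hUopen) hF'c hdisj
        set F₁ : Set Y := g ⁻¹' (Set.Ici (1/2 : ℝ)) with hF₁def
        have hF₁c : IsClosed F₁ := IsClosed.preimage g.continuous isClosed_Ici
        have hF₁m : MeasurableSet F₁ := hF₁c.measurableSet
        have hF'F₁ : F' ⊆ F₁ := by
          intro x hx
          have : g x = 1 := hg1 hx
          simp only [hF₁def, Set.mem_preimage, Set.mem_Ici, this]
          norm_num
        have hF₁U : F₁ ⊆ U := by
          intro x hx
          by_contra hxU
          have : g x = 0 := hg0 hxU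
          simp only [hF₁def, Set.mem_preimage, Set.mem_Ici, this] at hx
          norm_num at hx
        -- Urysohn function `h` : 1 on F₁, 0 on Uᶜ
        obtain ⟨h, hh0, hh1, hh01⟩ :=
          exists_bounded_zero_one_of_closed (isClosed_compl_iff.mpr hUopen) hF₁c
            (Set.disjoint_left.mpr fun x hxc hxF => hxc (hF₁U hxF))
        -- Urysohn function `ψ` : 1 on F', 0 on {g ≤ 1/2}
        have hTc : IsClosed (g ⁻¹' (Set.Iic (1/2 : ℝ))) := IsClosed.preimage g.continuous isClosed_Iic
        have hTdisj : Disjoint (g ⁻¹' (Set.Iic (1/2 : ℝ))) F' := by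
          refine Set.disjoint_left.mpr fun x hxT hxF => ?_
          have : g x = 1 := hg1 hxF
          simp only [Set.mem_preimage, Set.mem_Iic, this] at hxT
          norm_num at hxT
        obtain ⟨ψ, hψ0, hψ1, hψ01⟩ := exists_bounded_zero_one_of_closed hTc hF'c hTdisj
        have hψzero : ∀ x, x ∉ F₁ → ψ x = 0 := by
          intro x hx
          apply hψ0
          simp only [hF₁def, Set.mem_preimage, Set.mem_Ici, not_le] at hx
          exact Set.mem_preimage.mpr (le_of_lt hx)
        -- Step 1-2 : ∫ h dξ < δ
        have hξU : (ξ U).toReal < δ :=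
          (ENNReal.lt_ofReal_iff_toReal_lt (measure_ne_top _ _)).mp hUδ
        have hind_int : Integrable (U.indicator fun _ => (1:ℝ)) ξ :=
          (integrable_const (1:ℝ)).indicator hUopen.measurableSet
        have step1 : ∫ y, h y ∂ξ ≤ (ξ U).toReal := by
          have hmono : ∀ y, h y ≤ U.indicator (fun _ => (1:ℝ)) y := by
            intro y
            by_cases hy : y ∈ U
            · rw [Set.indicator_of_mem hy]; exact (hh01 y).2
            · rw [Set.indicator_of_notMem hy]; exact le_of_eq (hh0 hy)
          calc ∫ y, h y ∂ξ ≤ ∫ y, U.indicator (fun _ => (1:ℝ)) y ∂ξ :=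
                integral_mono (h.integrable _) hind_int hmono
            _ = (ξ U).toReal := by
                rw [integral_indicator_const (1:ℝ) hUopen.measurableSet]; simp [Measure.real]
        have step2 : ∫ y, h y ∂ξ < δ := lt_of_le_of_lt step1 hξU
        -- Step 3 : eventually ξn n F₁ < ofReal δ
        have step3 : ∀ᶠ n in atTop, ξn n F₁ < ENNReal.ofReal δ := by
          filter_upwards [(hweak h).eventually_lt_const step2] with n hn
          have hb : ((ξn n) F₁).toReal ≤ ∫ y, h y ∂(ξn n) := by
            have hmono : ∀ y, F₁.indicator (fun _ => (1:ℝ)) y ≤ h y := by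
              intro y
              by_cases hy : y ∈ F₁
              · rw [Set.indicator_of_mem hy]; exact ge_of_eq (hh1 hy)
              · rw [Set.indicator_of_notMem hy]; exact (hh01 y).1
            calc ((ξn n) F₁).toReal
                = ∫ y, F₁.indicator (fun _ => (1:ℝ)) y ∂(ξn n) := by
                  rw [integral_indicator_const (1:ℝ) hF₁m]; simp [Measure.real]
              _ ≤ ∫ y, h y ∂(ξn n) :=
                  integral_mono ((integrable_const (1:ℝ)).indicator hF₁m) (h.integrable _) hmono
          exact (ENNReal.lt_ofReal_iff_toReal_lt (measure_ne_top _ _)).mpr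
            (lt_of_le_of_lt hb hn)
        -- Step 4-6 : eventually ∫ ψ·rₙ dξₙ ≤ ε
        have step4 : ∀ᶠ n in atTop, ∫ y, ψ y * r n y ∂(ξn n) ≤ ε := by
          filter_upwards [step3] with n hn
          have hsmall : ∫ y in F₁, r n y ∂(ξn n) < ε := hδε n F₁ hF₁m hn
          have hψr_int : Integrable (fun y => ψ y * r n y) (ξn n) :=
            (hrint n).bdd_mul ψ.continuous.measurable.aestronglyMeasurable
              (c := 1) (Filter.Eventually.of_forall fun x => by
                rw [Real.norm_eq_abs, abs_le]
                exact ⟨by linarith [(hψ01 x).1], (hψ01 x).2⟩)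
          have hmono : ∀ y, ψ y * r n y ≤ F₁.indicator (r n) y := by
            intro y
            by_cases hy : y ∈ F₁
            · rw [Set.indicator_of_mem hy]
              exact mul_le_of_le_one_left (hrpos n y) (hψ01 y).2
            · rw [Set.indicator_of_notMem hy, hψzero y hy, zero_mul]
          calc ∫ y, ψ y * r n y ∂(ξn n)
              ≤ ∫ y, F₁.indicator (r n) y ∂(ξn n) :=
                integral_mono hψr_int ((hrint n).indicator hF₁m) hmono
            _ = ∫ y in F₁, r n y ∂(ξn n) := integral_indicator hF₁m
            _ ≤ ε := hsmall.le
        have step5 : ∫ y, ψ y ∂ζ ≤ ε := le_of_tendsto (hζweak ψ) step4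
        -- Step 7 : ζ F' ≤ ofReal ε
        have step6 : (ζ F').toReal ≤ ∫ y, ψ y ∂ζ := by
          have hmono : ∀ y, F'.indicator (fun _ => (1:ℝ)) y ≤ ψ y := by
            intro y
            by_cases hy : y ∈ F'
            · rw [Set.indicator_of_mem hy]; exact ge_of_eq (hψ1 hy)
            · rw [Set.indicator_of_notMem hy]; exact (hψ01 y).1
          calc (ζ F').toReal
              = ∫ y, F'.indicator (fun _ => (1:ℝ)) y ∂ζ := by
                rw [integral_indicator_const (1:ℝ) hF'c.measurableSet]; simp [Measure.real]
            _ ≤ ∫ y, ψ y ∂ζ :=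
                integral_mono ((integrable_const (1:ℝ)).indicator hF'c.measurableSet)
                  (ψ.integrable _) hmono
        exact (ENNReal.le_ofReal_iff_toReal_le (measure_ne_top _ _) hε.le).mpr
          (step6.trans step5)
      -- inner regularity of ζ on open sets by closed sets
      have hU : ζ U ≤ ENNReal.ofReal ε := by
        by_contra hlt
        push_neg at hlt
        obtain ⟨F', hF'U, hF'c, hF'gt⟩ :=
          MeasureTheory.Measure.WeaklyRegular.innerRegular hUopen (ENNReal.ofReal ε) hlt
        exact absurd (main F' hF'c hF'U) (not_le.mpr hF'gt)
      exact (measure_mono hAU).trans hU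
    have : ζ A ≤ 0 := by
      apply ENNReal.le_of_forall_pos_le_add
      intro ε' hε' _
      simpa using key ε' (by exact_mod_cast hε')
    exact le_antisymm this zero_le
  exact ⟨hac, ζ.rnDeriv ξ, Measure.measurable_rnDeriv ζ ξ,
    (Measure.withDensity_rnDeriv_eq ζ ξ hac).symm⟩
end

section
/- Let X be a Polish space, μ a finite Borel measure, and μ_k a nondecreasing sequence of finite Borel measures with μ = sup_k μ_k (i.e. μ_k(A) ↑ μ(A) for all Borel A). Suppose each μ_k is of the form μ_k = g_♯(r_k (m_k ⊗ L¹)) for a fixed Borel injective map g : S × ℝ → X, nonnegative r_k ∈ L¹(m_k ⊗ L¹), and finite Borel measures m_k on S with m_k = (P₁)_♯(r_k m_k ⊗ L¹). Then there exist a finite Borel measure m on S and a nonnegative r ∈ L¹(m ⊗ L¹) with μ = g_♯(r (m ⊗ L¹)). -/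
open MeasureTheory
open scoped ENNReal

/-- If `μₖ ↑ μ` is a nondecreasing sequence of finite Borel measures on a Polish space,
each of the form `μₖ = g_♯(rₖ (mₖ ⊗ L¹))` for a fixed Borel injective `g : S × ℝ → X`,
with `mₖ = (P₁)_♯(rₖ mₖ ⊗ L¹)`, then `μ = g_♯(r (m ⊗ L¹))` for some finite Borel measure
`m` on `S` and density `r ∈ L¹(m ⊗ L¹)`. -/
theorem stmt10 {X S : Type*}
    [TopologicalSpace X] [PolishSpace X] [MeasurableSpace X] [BorelSpace X]
    [TopologicalSpace S] [PolishSpace S] [MeasurableSpace S] [BorelSpace S]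
    (g : S × ℝ → X) (hg : Measurable g) (hginj : Function.Injective g)
    (μ : Measure X) [IsFiniteMeasure μ]
    (μk : ℕ → Measure X) (hμkfin : ∀ k, IsFiniteMeasure (μk k))
    (hmono : ∀ k, μk k ≤ μk (k + 1))
    (hsup : ∀ A : Set X, MeasurableSet A → μ A = ⨆ k, μk k A)
    (mk : ℕ → Measure S) (hmkfin : ∀ k, IsFiniteMeasure (mk k))
    (rk : ℕ → S × ℝ → ℝ≥0∞) (hrkmeas : ∀ k, Measurable (rk k))
    (hrep : ∀ k, μk k = Measure.map g (((mk k).prod volume).withDensity (rk k)))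
    (hmarg : ∀ k, mk k = Measure.map Prod.fst (((mk k).prod volume).withDensity (rk k))) :
    ∃ (m : Measure S) (r : S × ℝ → ℝ≥0∞), IsFiniteMeasure m ∧ Measurable r ∧
      μ = Measure.map g ((m.prod volume).withDensity r) := by
  haveI := hμkfin; haveI := hmkfin
  have hemb : MeasurableEmbedding g := hg.measurableEmbedding hginj
  set lk : ℕ → Measure (S × ℝ) := fun k => ((mk k).prod volume).withDensity (rk k) with hlk
  set lam : Measure (S × ℝ) := Measure.comap g μ with hlamdef
  have hlam : ∀ s : Set (S × ℝ), lam s = μ (g '' s) := fun s => hemb.comap_apply μ s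
  -- μk pushed back: μk (g '' s) = lk k s for measurable s
  have hback : ∀ k, ∀ s : Set (S × ℝ), MeasurableSet s → μk k (g '' s) = lk k s := by
    intro k s hs
    rw [hrep k, Measure.map_apply hg (hemb.measurableSet_image.2 hs),
      hginj.preimage_image]
  have hμle : ∀ k, μk k ≤ μ := by
    intro k
    refine Measure.le_iff.2 fun A hA => ?_
    rw [hsup A hA]
    exact le_iSup (fun k => μk k A) k
  -- lam is finite
  haveI hlamfin : IsFiniteMeasure lam :=
    ⟨by rw [hlam]; exact lt_of_le_of_lt (measure_mono (Set.subset_univ _)) (measure_lt_top μ _)⟩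
  set m : Measure S := Measure.map Prod.fst lam with hmdef
  haveI hmfin : IsFiniteMeasure m := by
    rw [hmdef]; infer_instance
  -- lk k ≤ lam on measurable sets
  have hlkle : ∀ k, ∀ s : Set (S × ℝ), MeasurableSet s → lk k s ≤ lam s := by
    intro k s hs
    rw [hlam, ← hback k s hs]
    exact (hμle k) _
  -- mk k ≤ m
  have hmkle : ∀ k, mk k ≤ m := by
    intro k
    refine Measure.le_iff.2 fun A hA => ?_
    rw [hmdef, Measure.map_apply measurable_fst hA, hmarg k,
      Measure.map_apply measurable_fst hA]
    exact hlkle k _ (measurable_fst hA)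
  -- lam ≪ m ⊗ vol
  have hac : lam ≪ m.prod volume := by
    refine Measure.AbsolutelyContinuous.mk fun s hs h0 => ?_
    rw [hlam, hsup _ (hemb.measurableSet_image.2 hs)]
    simp only [ENNReal.iSup_eq_zero]
    intro k
    rw [hback k s hs]
    have hack : lk k ≪ m.prod volume :=
      (withDensity_absolutelyContinuous _ _).trans
        (((hmkle k).absolutelyContinuous).prod Measure.AbsolutelyContinuous.rfl)
    exact hack h0
  refine ⟨m, lam.rnDeriv (m.prod volume), hmfin, Measure.measurable_rnDeriv _ _, ?_⟩
  rw [Measure.withDensity_rnDeriv_eq lam (m.prod volume) hac, hlamdef, hemb.map_comap]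
  -- μ.restrict (range g) = μ
  have hnull : μ (Set.range g)ᶜ = 0 := by
    rw [hsup _ hemb.measurableSet_range.compl]
    simp only [ENNReal.iSup_eq_zero]
    intro k
    rw [hrep k, Measure.map_apply hg hemb.measurableSet_range.compl]
    simp
  rw [Measure.restrict_eq_self_of_ae_mem]
  exact Filter.eventually_iff.2 ((measure_eq_zero_iff_ae_notMem.1 hnull).mono fun x hx => not_not.1 hx)
end

section
/- Let K ∈ ℝ, N ≥ 1, and s_K(t) = sin(√K t)/√K for K > 0, s_K(t) = t for K = 0, s_K(t) = sinh(√(−K) t)/√(−K) for K < 0. Let q : (−ℓ, ℓ) → (0, ∞) be a function satisfying, for all s ≤ t in (−ℓ, ℓ), (s_K(ℓ − t)/s_K(ℓ − s))^{N−1} ≤ q(t)/q(s) ≤ (s_K(t + ℓ)/s_K(s + ℓ))^{N−1}. Then q is locally Lipschitz continuous on (−ℓ, ℓ). -/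
open scoped ENNReal NNReal

/-- The comparison function `s_K` of the measure contraction property. -/
noncomputable def sK (K t : ℝ) : ℝ :=
  if 0 < K then Real.sin (Real.sqrt K * t) / Real.sqrt K
  else if K = 0 then t
  else Real.sinh (Real.sqrt (-K) * t) / Real.sqrt (-K)

lemma sK_contDiff (K : ℝ) : ContDiff ℝ 1 (sK K) := by
  unfold sK
  split_ifs with h1 h2
  · exact (Real.contDiff_sin.comp (contDiff_const.mul contDiff_id)).div_const _
  · exact contDiff_id
  · exact (Real.contDiff_sinh.comp (contDiff_const.mul contDiff_id)).div_const _

lemma sK_pos {K ℓ : ℝ} (hℓ : 0 < ℓ) (hKℓ2 : 0 < K → 2 * ℓ ≤ Real.pi / Real.sqrt K)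
    {x : ℝ} (hx : x ∈ Set.Ioo 0 (2 * ℓ)) : 0 < sK K x := by
  obtain ⟨hx0, hx2⟩ := hx
  unfold sK
  split_ifs with h1 h2
  · have hsq : 0 < Real.sqrt K := Real.sqrt_pos.2 h1
    apply div_pos _ hsq
    apply Real.sin_pos_of_pos_of_lt_pi (by positivity)
    have := hKℓ2 h1
    calc Real.sqrt K * x < Real.sqrt K * (2 * ℓ) := by
          exact mul_lt_mul_of_pos_left hx2 hsq
      _ ≤ Real.sqrt K * (Real.pi / Real.sqrt K) := by
          exact mul_le_mul_of_nonneg_left this hsq.le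
      _ = Real.pi := by field_simp
  · exact hx0
  · have hK : 0 < -K := by
      rcases lt_trichotomy K 0 with h | h | h
      · linarith
      · exact absurd h h2
      · exact absurd h h1
    have hsq : 0 < Real.sqrt (-K) := Real.sqrt_pos.2 hK
    exact div_pos (Real.sinh_pos_iff.2 (by positivity)) hsq


/-- If `q : (-ℓ, ℓ) → (0, ∞)` satisfies the MCP(K,N) two-sided density estimate
`(s_K(ℓ-t)/s_K(ℓ-s))^{N-1} ≤ q(t)/q(s) ≤ (s_K(t+ℓ)/s_K(s+ℓ))^{N-1}` for all `s ≤ t`,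
then `q` is locally Lipschitz on `(-ℓ, ℓ)`. -/
theorem stmt12 (K N ℓ : ℝ) (hN : 1 ≤ N) (hℓ : 0 < ℓ)
    (hKℓ : 0 < K → ℓ < Real.pi / Real.sqrt K)
    (q : ℝ → ℝ) (hqpos : ∀ t ∈ Set.Ioo (-ℓ) ℓ, 0 < q t)
    (hbound : ∀ s ∈ Set.Ioo (-ℓ) ℓ, ∀ t ∈ Set.Ioo (-ℓ) ℓ, s ≤ t →
      (sK K (ℓ - t) / sK K (ℓ - s)) ^ (N - 1) ≤ q t / q s ∧
      q t / q s ≤ (sK K (t + ℓ) / sK K (s + ℓ)) ^ (N - 1)) :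
    ∀ t ∈ Set.Ioo (-ℓ) ℓ, ∃ ε > 0, ∃ C : ℝ≥0,
      LipschitzOnWith C q (Set.Ioo (t - ε) (t + ε) ∩ Set.Ioo (-ℓ) ℓ) := by
  intro t₀ ht₀
  by_cases hN1 : N = 1
  · -- exponent is zero: q is constant
    have hz : N - 1 = 0 := by rw [hN1]; ring
    have hconst : ∀ x ∈ Set.Ioo (-ℓ) ℓ, ∀ y ∈ Set.Ioo (-ℓ) ℓ, x ≤ y → q y = q x := by
      intro x hx y hy hxy
      have h := hbound x hx y hy hxy
      rw [hz, Real.rpow_zero, Real.rpow_zero] at h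
      have h1 : q y / q x = 1 := le_antisymm h.2 h.1
      exact (div_eq_one_iff_eq (ne_of_gt (hqpos x hx))).1 h1
    refine ⟨1, one_pos, 0, LipschitzOnWith.of_dist_le_mul fun x hx y hy => ?_⟩
    have : q x = q y := by
      rcases le_total x y with h | h
      · exact (hconst x hx.2 y hy.2 h).symm
      · exact hconst y hy.2 x hx.2 h
    simp [this, Real.dist_eq]
  · have hN' : 1 < N := lt_of_le_of_ne hN (Ne.symm hN1)
    have hNe : N - 1 ≠ 0 := sub_ne_zero_of_ne hN'.ne'
    -- Step 1: 2ℓ ≤ π/√K when K > 0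
    have h2ℓ : 0 < K → 2 * ℓ ≤ Real.pi / Real.sqrt K := by
      intro hK
      by_contra hcon
      push_neg at hcon
      have hsq : 0 < Real.sqrt K := Real.sqrt_pos.2 hK
      set p := Real.pi / Real.sqrt K with hp_def
      have hp : 0 < p := div_pos Real.pi_pos hsq
      have hpℓ : ℓ < p := hKℓ hK
      have hts : p / 2 - ℓ ≤ p - ℓ := by linarith
      have hsmem : p / 2 - ℓ ∈ Set.Ioo (-ℓ) ℓ := ⟨by linarith, by linarith⟩
      have htmem : p - ℓ ∈ Set.Ioo (-ℓ) ℓ := ⟨by linarith, by linarith⟩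
      have h := (hbound _ hsmem _ htmem hts).2
      have e1 : sK K (p - ℓ + ℓ) = 0 := by
        rw [sub_add_cancel]
        unfold sK
        rw [if_pos hK, hp_def, mul_comm, div_mul_cancel₀ _ hsq.ne', Real.sin_pi, zero_div]
      have e2 : sK K (p / 2 - ℓ + ℓ) = 1 / Real.sqrt K := by
        rw [sub_add_cancel]
        unfold sK
        have hh : Real.sqrt K * (p / 2) = Real.pi / 2 := by
          rw [hp_def]; field_simp
        rw [if_pos hK, hh, Real.sin_pi_div_two]
      rw [e1, e2, zero_div, Real.zero_rpow hNe] at h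
      have := div_pos (hqpos _ htmem) (hqpos _ hsmem)
      linarith
    have hpos : ∀ x ∈ Set.Ioo 0 (2 * ℓ), 0 < sK K x := fun x hx => sK_pos hℓ h2ℓ hx
    -- positive F, G
    set F : ℝ → ℝ := fun t => sK K (ℓ - t) ^ (N - 1) with hF_def
    set G : ℝ → ℝ := fun t => sK K (t + ℓ) ^ (N - 1) with hG_def
    have hfpos : ∀ t ∈ Set.Ioo (-ℓ) ℓ, 0 < sK K (ℓ - t) := by
      intro t ht; exact hpos _ ⟨by linarith [ht.2], by linarith [ht.1]⟩
    have hgpos : ∀ t ∈ Set.Ioo (-ℓ) ℓ, 0 < sK K (t + ℓ) := by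
      intro t ht; exact hpos _ ⟨by linarith [ht.1], by linarith [ht.2]⟩
    have hFpos : ∀ t ∈ Set.Ioo (-ℓ) ℓ, 0 < F t := by
      intro t ht; exact Real.rpow_pos_of_pos (hfpos t ht) _
    have hGpos : ∀ t ∈ Set.Ioo (-ℓ) ℓ, 0 < G t := by
      intro t ht; exact Real.rpow_pos_of_pos (hgpos t ht) _
    -- reformulated bounds
    have hb' : ∀ s ∈ Set.Ioo (-ℓ) ℓ, ∀ t ∈ Set.Ioo (-ℓ) ℓ, s ≤ t →
        F t / F s ≤ q t / q s ∧ q t / q s ≤ G t / G s := by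
      intro s hs t ht hst
      have h := hbound s hs t ht hst
      rwa [Real.div_rpow (hfpos t ht).le (hfpos s hs).le,
        Real.div_rpow (hgpos t ht).le (hgpos s hs).le] at h
    -- smoothness
    have hFc : ContDiffAt ℝ 1 F t₀ := by
      have hin : ContDiff ℝ 1 (fun t : ℝ => sK K (ℓ - t)) :=
        (sK_contDiff K).comp (contDiff_const.sub contDiff_id)
      exact (Real.contDiffAt_rpow_const_of_ne (hfpos t₀ ht₀).ne').comp t₀ hin.contDiffAt
    have hGc : ContDiffAt ℝ 1 G t₀ := by
      have hin : ContDiff ℝ 1 (fun t : ℝ => sK K (t + ℓ)) :=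
        (sK_contDiff K).comp (contDiff_id.add contDiff_const)
      exact (Real.contDiffAt_rpow_const_of_ne (hgpos t₀ ht₀).ne').comp t₀ hin.contDiffAt
    obtain ⟨LF, UF, hUF, hLF⟩ := hFc.exists_lipschitzOnWith
    obtain ⟨LG, UG, hUG, hLG⟩ := hGc.exists_lipschitzOnWith
    have hF0 := hFpos t₀ ht₀
    have hG0 := hGpos t₀ ht₀
    have hq0 := hqpos t₀ ht₀
    -- good neighborhood
    have hV : ∀ᶠ x in nhds t₀, x ∈ Set.Ioo (-ℓ) ℓ ∧ F t₀ / 2 < F x ∧ F x < 2 * F t₀ ∧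
        G t₀ / 2 < G x ∧ G x < 2 * G t₀ ∧ x ∈ UF ∧ x ∈ UG := by
      filter_upwards [isOpen_Ioo.mem_nhds ht₀,
        hFc.continuousAt.eventually (eventually_gt_nhds (by linarith : F t₀ / 2 < F t₀)),
        hFc.continuousAt.eventually (eventually_lt_nhds (by linarith : F t₀ < 2 * F t₀)),
        hGc.continuousAt.eventually (eventually_gt_nhds (by linarith : G t₀ / 2 < G t₀)),
        hGc.continuousAt.eventually (eventually_lt_nhds (by linarith : G t₀ < 2 * G t₀)),
        hUF, hUG] with x h1 h2 h3 h4 h5 h6 h7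
      exact ⟨h1, h2, h3, h4, h5, h6, h7⟩
    obtain ⟨ε, hε, hball⟩ := Metric.eventually_nhds_iff_ball.1 hV
    set Creal : ℝ := 4 * q t₀ * ((LG : ℝ) / G t₀ + (LF : ℝ) / F t₀) with hCreal_def
    have hCreal_nonneg : 0 ≤ Creal := by
      apply mul_nonneg (by linarith)
      have := div_nonneg LG.coe_nonneg hG0.le
      have := div_nonneg LF.coe_nonneg hF0.le
      linarith
    refine ⟨ε, hε, Creal.toNNReal, LipschitzOnWith.of_dist_le_mul fun x hx y hy => ?_⟩
    have hP : ∀ z ∈ Set.Ioo (t₀ - ε) (t₀ + ε) ∩ Set.Ioo (-ℓ) ℓ,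
        z ∈ Set.Ioo (-ℓ) ℓ ∧ F t₀ / 2 < F z ∧ F z < 2 * F t₀ ∧
        G t₀ / 2 < G z ∧ G z < 2 * G t₀ ∧ z ∈ UF ∧ z ∈ UG := by
      intro z hz
      exact hball z (by rw [Real.ball_eq_Ioo]; exact hz.1)
    -- q is bounded on S
    have hq2 : ∀ z ∈ Set.Ioo (t₀ - ε) (t₀ + ε) ∩ Set.Ioo (-ℓ) ℓ, q z ≤ 2 * q t₀ := by
      intro z hz
      obtain ⟨hzI, hFl, hFu, hGl, hGu, -, -⟩ := hP z hz
      have hqz := hqpos z hzI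
      rcases le_total z t₀ with h | h
      · have hb := (hb' z hzI t₀ ht₀ h).1
        rw [div_le_div_iff₀ (hFpos z hzI) hqz] at hb
        nlinarith [hFpos z hzI]
      · have hb := (hb' t₀ ht₀ z hzI h).2
        rw [div_le_div_iff₀ hq0 (hGpos t₀ ht₀)] at hb
        nlinarith [hGpos z hzI]
    -- the key one-sided estimate
    have key : ∀ a ∈ Set.Ioo (t₀ - ε) (t₀ + ε) ∩ Set.Ioo (-ℓ) ℓ,
        ∀ b ∈ Set.Ioo (t₀ - ε) (t₀ + ε) ∩ Set.Ioo (-ℓ) ℓ, a ≤ b →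
        |q b - q a| ≤ Creal * (b - a) := by
      intro a ha b hb hab
      obtain ⟨haI, hFla, hFua, hGla, hGua, haUF, haUG⟩ := hP a ha
      obtain ⟨hbI, hFlb, hFub, hGlb, hGub, hbUF, hbUG⟩ := hP b hb
      have hqa := hqpos a haI
      have hqb := hqpos b hbI
      have hFa := hFpos a haI
      have hFb := hFpos b hbI
      have hGa := hGpos a haI
      have hGb := hGpos b hbI
      have hqa2 := hq2 a ha
      have hd : (0:ℝ) ≤ b - a := by linarith
      have hdF : |F b - F a| ≤ (LF : ℝ) * (b - a) := by
        have h := hLF.dist_le_mul b hbUF a haUF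
        rwa [Real.dist_eq, Real.dist_eq, abs_of_nonneg hd] at h
      have hdG : |G b - G a| ≤ (LG : ℝ) * (b - a) := by
        have h := hLG.dist_le_mul b hbUG a haUG
        rwa [Real.dist_eq, Real.dist_eq, abs_of_nonneg hd] at h
      have hLFd : (0:ℝ) ≤ (LF : ℝ) * (b - a) := mul_nonneg LF.coe_nonneg hd
      have hLGd : (0:ℝ) ≤ (LG : ℝ) * (b - a) := mul_nonneg LG.coe_nonneg hd
      obtain ⟨hlow, hup⟩ := hb' a haI b hbI hab
      rw [div_le_div_iff₀ hFa hqa] at hlow  -- F b * q a ≤ q b * F a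
      rw [div_le_div_iff₀ hqa hGa] at hup   -- q b * G a ≤ G b * q a
      have hCsplit : Creal * (b - a) =
          4 * q t₀ * ((LG : ℝ) / G t₀) * (b - a) + 4 * q t₀ * ((LF : ℝ) / F t₀) * (b - a) := by
        rw [hCreal_def]; ring
      have htermG : 0 ≤ 4 * q t₀ * ((LG : ℝ) / G t₀) * (b - a) :=
        mul_nonneg (mul_nonneg (by linarith) (div_nonneg LG.coe_nonneg hG0.le)) hd
      have htermF : 0 ≤ 4 * q t₀ * ((LF : ℝ) / F t₀) * (b - a) :=
        mul_nonneg (mul_nonneg (by linarith) (div_nonneg LF.coe_nonneg hF0.le)) hd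
      rw [abs_le]
      constructor
      · -- q a - q b ≤ Creal * (b - a)
        have e1 : (q a - q b) * F a ≤ q a * (F a - F b) := by
          have h := hlow; ring_nf; ring_nf at h; linarith
        have e2 : F a - F b ≤ (LF : ℝ) * (b - a) := by
          have h := (abs_le.1 hdF).1; linarith
        have e3 : q a * (F a - F b) ≤ 2 * q t₀ * ((LF : ℝ) * (b - a)) := by
          rcases le_or_gt 0 (F a - F b) with h | h
          · calc q a * (F a - F b) ≤ 2 * q t₀ * (F a - F b) :=
                  mul_le_mul_of_nonneg_right hqa2 h
              _ ≤ 2 * q t₀ * ((LF : ℝ) * (b - a)) :=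
                  mul_le_mul_of_nonneg_left e2 (by linarith)
          · have h1 : q a * (F a - F b) ≤ 0 := mul_nonpos_of_nonneg_of_nonpos hqa.le h.le
            have h2 : 0 ≤ 2 * q t₀ * ((LF : ℝ) * (b - a)) := mul_nonneg (by linarith) hLFd
            linarith
        have e4 : (q a - q b) * F a ≤ 2 * q t₀ * ((LF : ℝ) * (b - a)) := le_trans e1 e3
        have e5 : q a - q b ≤ 2 * q t₀ * ((LF : ℝ) * (b - a)) / F a :=
          (le_div_iff₀ hFa).2 e4
        have e6 : 2 * q t₀ * ((LF : ℝ) * (b - a)) / F a ≤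
            2 * q t₀ * ((LF : ℝ) * (b - a)) / (F t₀ / 2) :=
          div_le_div_of_nonneg_left (mul_nonneg (by linarith) hLFd) (by linarith) (by linarith)
        have e7 : 2 * q t₀ * ((LF : ℝ) * (b - a)) / (F t₀ / 2) =
            4 * q t₀ * ((LF : ℝ) / F t₀) * (b - a) := by
          field_simp; ring
        rw [hCsplit]
        rw [e7] at e6
        linarith
      · -- q b - q a ≤ Creal * (b - a)
        have e1 : (q b - q a) * G a ≤ q a * (G b - G a) := by
          have h := hup; ring_nf; ring_nf at h; linarith
        have e2 : G b - G a ≤ (LG : ℝ) * (b - a) := (abs_le.1 hdG).2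
        have e3 : q a * (G b - G a) ≤ 2 * q t₀ * ((LG : ℝ) * (b - a)) := by
          rcases le_or_gt 0 (G b - G a) with h | h
          · calc q a * (G b - G a) ≤ 2 * q t₀ * (G b - G a) :=
                  mul_le_mul_of_nonneg_right hqa2 h
              _ ≤ 2 * q t₀ * ((LG : ℝ) * (b - a)) :=
                  mul_le_mul_of_nonneg_left e2 (by linarith)
          · have h1 : q a * (G b - G a) ≤ 0 := mul_nonpos_of_nonneg_of_nonpos hqa.le h.le
            have h2 : 0 ≤ 2 * q t₀ * ((LG : ℝ) * (b - a)) := mul_nonneg (by linarith) hLGd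
            linarith
        have e4 : (q b - q a) * G a ≤ 2 * q t₀ * ((LG : ℝ) * (b - a)) := le_trans e1 e3
        have e5 : q b - q a ≤ 2 * q t₀ * ((LG : ℝ) * (b - a)) / G a :=
          (le_div_iff₀ hGa).2 e4
        have e6 : 2 * q t₀ * ((LG : ℝ) * (b - a)) / G a ≤
            2 * q t₀ * ((LG : ℝ) * (b - a)) / (G t₀ / 2) :=
          div_le_div_of_nonneg_left (mul_nonneg (by linarith) hLGd) (by linarith) (by linarith)
        have e7 : 2 * q t₀ * ((LG : ℝ) * (b - a)) / (G t₀ / 2) =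
            4 * q t₀ * ((LG : ℝ) / G t₀) * (b - a) := by
          field_simp; ring
        rw [hCsplit]
        rw [e7] at e6
        linarith
    -- conclude
    have hC : (Creal.toNNReal : ℝ) = Creal := Real.coe_toNNReal _ hCreal_nonneg
    rw [Real.dist_eq, Real.dist_eq, hC]
    rcases le_total x y with h | h
    · have hk := key x hx y hy h
      rw [abs_sub_comm] at hk
      calc |q x - q y| ≤ Creal * (y - x) := hk
        _ = Creal * |x - y| := by
            rw [abs_sub_comm, abs_of_nonneg (by linarith : (0:ℝ) ≤ y - x)]
    · have hk := key y hy x hx h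
      calc |q x - q y| ≤ Creal * (x - y) := hk
        _ = Creal * |x - y| := by
            rw [abs_of_nonneg (by linarith : (0:ℝ) ≤ x - y)]
end

section
/- Let X be Polish, R ⊆ X × X an equivalence relation on a Borel subset T of X whose quotient map f : T → T is μ-measurable for a Borel probability measure μ concentrated on T, with (T, B(T)) countably generated. Suppose μ = ∫_S μ_y dm(y) is the disintegration of μ over the quotient, with each μ_y a probability concentrated on the class R(y). If the map y ↦ μ_y is weakly continuous on a compact set K, then the set {(y, x) : y ∈ K, x ∈ R(y), μ_y({x}) > 0} is a countable union of Borel sets; in particular it is Borel. -/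
open MeasureTheory Filter Topology
open scoped ENNReal

/-- Disintegration along an equivalence relation `R` on a Polish space: if the
conditional probabilities `y ↦ μ_y` (each concentrated on the class `R y`) are weakly
continuous on a compact set `K`, and the graph of `R` is Borel, then the set
`{(y, x) : y ∈ K, x ∈ R y, μ_y({x}) > 0}` of atoms is a countable union of Borel sets;
in particular it is Borel. -/
theorem stmt14 {X : Type*} [TopologicalSpace X] [PolishSpace X]
    [MeasurableSpace X] [BorelSpace X]
    (T : Set X) (hT : MeasurableSet T)
    (μ : Measure X) [IsProbabilityMeasure μ] (hμT : μ T = 1)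
    (R : X → Set X) (hR : MeasurableSet {p : X × X | p.2 ∈ R p.1})
    (m : Measure X) [IsProbabilityMeasure m]
    (cond : X → ProbabilityMeasure X)
    (hconc : ∀ᵐ y ∂m, (cond y : Measure X) (R y) = 1)
    (hdisint : ∀ A : Set X, MeasurableSet A →
      μ A = ∫⁻ y, (cond y : Measure X) A ∂m)
    (Kc : Set X) (hKc : IsCompact Kc)
    (hcont : ContinuousOn cond Kc) :
    (∃ B : ℕ → Set (X × X), (∀ n, MeasurableSet (B n)) ∧
        {p : X × X | p.1 ∈ Kc ∧ p.2 ∈ R p.1 ∧ 0 < (cond p.1 : Measure X) {p.2}} =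
          ⋃ n, B n) ∧
      MeasurableSet
        {p : X × X | p.1 ∈ Kc ∧ p.2 ∈ R p.1 ∧ 0 < (cond p.1 : Measure X) {p.2}} := by
  letI := TopologicalSpace.upgradeIsCompletelyMetrizable X
  -- The "super-level" sets of the atom mass function are closed.
  have key : ∀ ε : ℝ≥0∞,
      IsClosed {p : X × X | p.1 ∈ Kc ∧ ε ≤ (cond p.1 : Measure X) {p.2}} := by
    intro ε
    set S := {p : X × X | p.1 ∈ Kc ∧ ε ≤ (cond p.1 : Measure X) {p.2}} with hS
    rw [← closure_subset_iff_isClosed]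
    intro p hp
    have hp1 : p.1 ∈ Kc := by
      have h1 : closure S ⊆ Kc ×ˢ (Set.univ : Set X) := by
        apply closure_minimal _ ((hKc.isClosed).prod isClosed_univ)
        intro q hq
        exact ⟨hq.1, Set.mem_univ _⟩
      exact (h1 hp).1
    have hne : (𝓝[S] p).NeBot := mem_closure_iff_nhdsWithin_neBot.mp hp
    -- the conditional measures converge weakly along the filter
    have hfst : Tendsto (fun q : X × X => q.1) (𝓝[S] p) (𝓝[Kc] p.1) := by
      apply tendsto_nhdsWithin_of_tendsto_nhds_of_eventually_within
      · exact (continuous_fst.tendsto p).mono_left nhdsWithin_le_nhds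
      · filter_upwards [self_mem_nhdsWithin] with q hq using hq.1
    have htend : Tendsto (fun q : X × X => cond q.1) (𝓝[S] p) (𝓝 (cond p.1)) :=
      Filter.Tendsto.comp (hcont p.1 hp1) hfst
    refine ⟨hp1, ?_⟩
    -- reduce to closed balls around p.2
    have hsingle : ({p.2} : Set X) = ⋂ n : ℕ, Metric.closedBall p.2 (1 / (n + 1)) := by
      apply Set.eq_of_subset_of_subset
      · intro x hx
        simp only [Set.mem_singleton_iff] at hx
        subst hx
        exact Set.mem_iInter.mpr fun n => Metric.mem_closedBall_self (by positivity)
      · intro x hx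
        simp only [Set.mem_iInter, Metric.mem_closedBall] at hx
        have : dist x p.2 = 0 := by
          by_contra h
          obtain ⟨n, hn⟩ := exists_nat_gt (1 / dist x p.2)
          have hd : 0 < dist x p.2 := lt_of_le_of_ne dist_nonneg (Ne.symm h)
          have h1 : (1 : ℝ) / (n + 1) < dist x p.2 := by
            rw [div_lt_iff₀ (by positivity)]
            have : 1 / dist x p.2 < n + 1 := hn.trans (by linarith)
            calc (1 : ℝ) = dist x p.2 * (1 / dist x p.2) := by field_simp
            _ < dist x p.2 * (n + 1) := by
                exact mul_lt_mul_of_pos_left this hd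
          exact absurd (hx n) (not_le.mpr h1)
        simp [dist_eq_zero.mp this]
    rw [hsingle]
    rw [Directed.measure_iInter
      (fun n => (Metric.isClosed_closedBall.measurableSet).nullMeasurableSet)
      (by
        intro i j
        refine ⟨max i j, ?_, ?_⟩ <;>
          apply Metric.closedBall_subset_closedBall <;>
          · apply div_le_div_of_nonneg_left one_pos.le (by positivity)
            gcongr
            first
            | exact_mod_cast le_max_left i j
            | exact_mod_cast le_max_right i j)
      ⟨0, measure_ne_top _ _⟩]
    refine le_iInf fun n => ?_
    set C := Metric.closedBall p.2 (1 / ((n : ℝ) + 1)) with hC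
    have hevl : ∀ᶠ q : X × X in 𝓝[S] p, ε ≤ (cond q.1 : Measure X) C := by
      have hsnd : Tendsto (fun q : X × X => q.2) (𝓝[S] p) (𝓝 p.2) :=
        (continuous_snd.tendsto p).mono_left nhdsWithin_le_nhds
      have hCn : C ∈ 𝓝 p.2 := Metric.closedBall_mem_nhds _ (by positivity)
      filter_upwards [self_mem_nhdsWithin, hsnd hCn] with q hq hq2
      exact le_trans hq.2 (measure_mono (Set.singleton_subset_iff.mpr hq2))
    calc ε ≤ (𝓝[S] p).liminf fun q : X × X => (cond q.1 : Measure X) C :=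
          le_liminf_of_le (by isBoundedDefault) hevl
      _ ≤ (𝓝[S] p).limsup fun q : X × X => (cond q.1 : Measure X) C :=
          liminf_le_limsup
      _ ≤ (cond p.1 : Measure X) C :=
          ProbabilityMeasure.limsup_measure_closed_le_of_tendsto htend
            Metric.isClosed_closedBall
  -- define the pieces
  set B : ℕ → Set (X × X) := fun n =>
    {p : X × X | p.1 ∈ Kc ∧ ((n : ℝ≥0∞))⁻¹ ≤ (cond p.1 : Measure X) {p.2}} ∩
      {p : X × X | p.2 ∈ R p.1} with hB
  have hBmeas : ∀ n, MeasurableSet (B n) := fun n =>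
    ((key _).measurableSet).inter hR
  have hBeq : {p : X × X | p.1 ∈ Kc ∧ p.2 ∈ R p.1 ∧ 0 < (cond p.1 : Measure X) {p.2}} =
      ⋃ n, B n := by
    ext p
    simp only [Set.mem_setOf_eq, Set.mem_iUnion, hB, Set.mem_inter_iff]
    constructor
    · rintro ⟨h1, h2, h3⟩
      obtain ⟨n, hn⟩ := ENNReal.exists_inv_nat_lt h3.ne'
      exact ⟨n, ⟨h1, hn.le⟩, h2⟩
    · rintro ⟨n, ⟨h1, hn⟩, h2⟩
      refine ⟨h1, h2, lt_of_lt_of_le ?_ hn⟩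
      exact ENNReal.inv_pos.mpr (ENNReal.natCast_ne_top n)
  refine ⟨⟨B, hBmeas, hBeq⟩, ?_⟩
  rw [hBeq]
  exact MeasurableSet.iUnion hBmeas
end

section
/- Let (X, d_L) be a non-branching geodesic metric space, meaning geodesics with the same endpoints coincide and no geodesic admits two distinct extensions through an interior point. Suppose x ∈ X is such that there exist w ≠ x and z ≠ x with d_L(w, x) + d_L(x, z) = d_L(w, z) < ∞ (x is an interior point of a geodesic from w to z). Then any two geodesics through x realizing distances to points w', z' with d_L(w', x) + d_L(x, z') = d_L(w', z') and lying in the same cyclically-monotone relation must lie on a single geodesic: the union ⋃_{y : (x,y) ∈ G} γ_{[x,y]} ∪ ⋃_{z : (z,x) ∈ G} γ_{[z,x]} is contained in the image of a single geodesic, where G is a d_L-cyclically monotone set of aligned pairs. -/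
open scoped ENNReal BigOperators

/-- `d_L`-cyclical monotonicity for subsets of `X × X`. -/
def IsCyclicallyMonotone {X : Type*} (c : X → X → ℝ≥0∞) (Γ : Set (X × X)) : Prop :=
  ∀ (n : ℕ) (p : Fin (n + 1) → X × X), (∀ i, p i ∈ Γ) →
    ∑ i, c (p i).1 (p i).2 ≤ ∑ i, c (p (i + 1)).1 (p i).2

section Aux
variable {X : Type*} [EMetricSpace X]


/-- Existence of an intermediate point at prescribed distance. -/
lemma exists_mid
    (hgeo : ∀ x y : X, edist x y < ⊤ → ∃ γ : ℝ → X, γ 0 = x ∧ γ 1 = y ∧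
      ∀ s ∈ Set.Icc (0 : ℝ) 1, ∀ t ∈ Set.Icc (0 : ℝ) 1,
        edist (γ s) (γ t) = ENNReal.ofReal |s - t| * edist x y)
    (u v : X) (huv : edist u v ≠ ⊤) (a : ℝ≥0∞) (ha : a ≤ edist u v) :
    ∃ m, edist u m = a ∧ edist m v = edist u v - a := by
  rcases eq_or_ne (edist u v) 0 with h0 | h0
  · have ha0 : a = 0 := le_antisymm (ha.trans h0.le) zero_le
    exact ⟨u, by simp [ha0], by simp [ha0, h0]⟩
  · set d := edist u v with hd
    obtain ⟨γ, hγ0, hγ1, hγ⟩ := hgeo u v (lt_top_iff_ne_top.2 huv)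
    have hadne : a / d ≠ ⊤ := by
      simp [ENNReal.div_eq_top, h0, huv, (ha.trans_lt (lt_top_iff_ne_top.2 huv)).ne]
    have hadle : a / d ≤ 1 := ENNReal.div_le_of_le_mul (by simpa using ha)
    set s := (a / d).toReal with hs
    have hs0 : 0 ≤ s := ENNReal.toReal_nonneg
    have hs1 : s ≤ 1 := by
      have h := ENNReal.toReal_mono (show (1:ℝ≥0∞) ≠ ⊤ by simp) hadle
      rwa [ENNReal.toReal_one] at h
    have hofs : ENNReal.ofReal s = a / d := ENNReal.ofReal_toReal hadne
    refine ⟨γ s, ?_, ?_⟩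
    · have := hγ 0 (by constructor <;> norm_num) s ⟨hs0, hs1⟩
      rw [hγ0] at this
      rw [this]
      rw [abs_of_nonpos (by linarith), neg_sub, sub_zero, hofs,
        ENNReal.div_mul_cancel h0 huv]
    · have := hγ s ⟨hs0, hs1⟩ 1 (by constructor <;> norm_num)
      rw [hγ1] at this
      rw [this, abs_of_nonpos (by linarith), neg_sub,
        ENNReal.ofReal_sub 1 hs0, ENNReal.ofReal_one, hofs,
        ENNReal.sub_mul (fun _ _ => huv), one_mul,
        ENNReal.div_mul_cancel h0 huv]

/-- If `x` is between `w` and `p`, and `m` is between `x` and `p`, then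
`m` is between `w` and `p` and aligned from `w`. -/
lemma align_trans (w x m p : X) (hfin : edist w p ≠ ⊤)
    (h1 : edist w x + edist x p = edist w p)
    (h2 : edist x m + edist m p = edist x p) :
    edist w m = edist w x + edist x m ∧ edist w m + edist m p = edist w p := by
  have hmp : edist m p ≠ ⊤ := by
    refine ne_top_of_le_ne_top hfin ?_
    calc edist m p ≤ edist x p := le_add_self.trans h2.le
    _ ≤ edist w p := le_add_self.trans h1.le
  have key : edist w m + edist m p = edist w p := by
    refine le_antisymm ?_ (edist_triangle _ _ _)
    calc edist w m + edist m p ≤ (edist w x + edist x m) + edist m p := by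
          gcongr; exact edist_triangle _ _ _
    _ = edist w x + edist x p := by rw [add_assoc, h2]
    _ = edist w p := h1
  refine ⟨?_, key⟩
  have : edist w m + edist m p = (edist w x + edist x m) + edist m p := by
    rw [key, add_assoc, h2, h1]
  rw [add_comm (edist w m), add_comm _ (edist m p)] at this
  exact (ENNReal.add_right_inj hmp).1 this

/-- Uniqueness of geodesic extension, small-step case (`a ≤ d(w,x)`). -/
lemma unique_ext_small
    (hgeo : ∀ x y : X, edist x y < ⊤ → ∃ γ : ℝ → X, γ 0 = x ∧ γ 1 = y ∧
      ∀ s ∈ Set.Icc (0 : ℝ) 1, ∀ t ∈ Set.Icc (0 : ℝ) 1,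
        edist (γ s) (γ t) = ENNReal.ofReal |s - t| * edist x y)
    (hnb : ∀ (x y : X) (r : ℝ≥0∞), r ≠ ⊤ → edist x y = r / 2 →
      ∃! z : X, edist x z = r ∧ edist y z = r / 2)
    (w x : X) (hfin : edist w x ≠ ⊤)
    (a : ℝ≥0∞) (ha : a ≤ edist w x) (p q : X)
    (hp1 : edist x p = a) (hp2 : edist w p = edist w x + a)
    (hq1 : edist x q = a) (hq2 : edist w q = edist w x + a) : p = q := by
  have hane : a ≠ ⊤ := ne_top_of_le_ne_top hfin ha
  obtain ⟨u, hu1, hu2⟩ := exists_mid hgeo w x hfin (edist w x - a) tsub_le_self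
  rw [ENNReal.sub_sub_cancel hfin ha] at hu2
  have key : ∀ r : X, edist x r = a → edist w r = edist w x + a → edist u r = a + a := by
    intro r hr1 hr2
    refine le_antisymm ?_ ?_
    · calc edist u r ≤ edist u x + edist x r := edist_triangle _ _ _
      _ = a + a := by rw [hu2, hr1]
    · have h := edist_triangle w u r
      rw [hr2, hu1] at h
      have h' : (edist w x - a) + (a + a) ≤ (edist w x - a) + edist u r := by
        calc (edist w x - a) + (a + a) = ((edist w x - a) + a) + a := by ring
        _ = edist w x + a := by rw [tsub_add_cancel_of_le ha]
        _ ≤ _ := h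
      exact (ENNReal.add_le_add_iff_left (ne_top_of_le_ne_top hfin tsub_le_self)).1 h'
  have h2div : (a + a) / 2 = a := by
    rw [show a + a = a * 2 by ring, mul_div_assoc, ENNReal.div_self (by norm_num) (by norm_num),
      mul_one]
  have huxr : edist u x = (a + a) / 2 := by
    rw [hu2, h2div]
  obtain ⟨m, _, hmu⟩ := hnb u x (a + a) (by simp [hane]) huxr

  have hp := hmu p ⟨key p hp1 hp2, by rw [h2div]; exact hp1⟩
  have hq := hmu q ⟨key q hq1 hq2, by rw [h2div]; exact hq1⟩
  rw [hp, hq]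

/-- Uniqueness of geodesic extension: general case. -/
lemma unique_ext
    (hgeo : ∀ x y : X, edist x y < ⊤ → ∃ γ : ℝ → X, γ 0 = x ∧ γ 1 = y ∧
      ∀ s ∈ Set.Icc (0 : ℝ) 1, ∀ t ∈ Set.Icc (0 : ℝ) 1,
        edist (γ s) (γ t) = ENNReal.ofReal |s - t| * edist x y)
    (hnb : ∀ (x y : X) (r : ℝ≥0∞), r ≠ ⊤ → edist x y = r / 2 →
      ∃! z : X, edist x z = r ∧ edist y z = r / 2)
    (w x : X) (hwx : w ≠ x) (hfin : edist w x ≠ ⊤)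
    (a : ℝ≥0∞) (hane : a ≠ ⊤) (p q : X)
    (hp1 : edist x p = a) (hp2 : edist w p = edist w x + a)
    (hq1 : edist x q = a) (hq2 : edist w q = edist w x + a) : p = q := by
  have hδ0 : edist w x ≠ 0 := by simpa using hwx
  -- find n with a ≤ n * edist w x
  obtain ⟨n, hn⟩ : ∃ n : ℕ, a ≤ n * edist w x := by
    obtain ⟨n, hn⟩ := exists_nat_ge (a.toReal / (edist w x).toReal)
    refine ⟨n, ?_⟩
    have hd0 : 0 < (edist w x).toReal := ENNReal.toReal_pos hδ0 hfin
    have : a.toReal ≤ n * (edist w x).toReal := by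
      rw [div_le_iff₀ hd0] at hn; linarith
    calc a = ENNReal.ofReal a.toReal := (ENNReal.ofReal_toReal hane).symm
    _ ≤ ENNReal.ofReal (n * (edist w x).toReal) := ENNReal.ofReal_le_ofReal this
    _ = ENNReal.ofReal n * ENNReal.ofReal (edist w x).toReal := by
        rw [ENNReal.ofReal_mul (by positivity)]
    _ = n * edist w x := by
        rw [ENNReal.ofReal_natCast, ENNReal.ofReal_toReal hfin]
  clear hδ0
  induction n generalizing w x a p q with
  | zero =>
      simp only [Nat.cast_zero, zero_mul, nonpos_iff_eq_zero] at hn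
      subst hn
      have hp : p = x := by rw [← edist_eq_zero, edist_comm]; exact hp1
      have hq : q = x := by rw [← edist_eq_zero, edist_comm]; exact hq1
      rw [hp, hq]
  | succ n ih =>
      by_cases hsmall : a ≤ edist w x
      · exact unique_ext_small hgeo hnb w x hfin a hsmall p q hp1 hp2 hq1 hq2
      · push_neg at hsmall
        set δ := edist w x with hδ
        -- point at distance δ beyond x on [x,p] and on [x,q]
        obtain ⟨p₁, hp₁1, hp₁2⟩ := exists_mid hgeo x p (by rw [hp1]; exact hane)
          δ (by rw [hp1]; exact hsmall.le)
        obtain ⟨q₁, hq₁1, hq₁2⟩ := exists_mid hgeo x q (by rw [hq1]; exact hane)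
          δ (by rw [hq1]; exact hsmall.le)
        have hpfin : edist w p ≠ ⊤ := by
          rw [hp2]; exact ENNReal.add_ne_top.2 ⟨hfin, hane⟩
        have hqfin : edist w q ≠ ⊤ := by
          rw [hq2]; exact ENNReal.add_ne_top.2 ⟨hfin, hane⟩
        have hδx : δ ≠ ⊤ := hfin
        have hbtwp : edist x p₁ + edist p₁ p = edist x p := by
          rw [hp₁1, hp₁2, hp1]; exact add_tsub_cancel_of_le hsmall.le
        have hbtwq : edist x q₁ + edist q₁ q = edist x q := by
          rw [hq₁1, hq₁2, hq1]; exact add_tsub_cancel_of_le hsmall.le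
        obtain ⟨hwp₁, _⟩ := align_trans w x p₁ p hpfin (by rw [hp1, hp2]) hbtwp
        obtain ⟨hwq₁, _⟩ := align_trans w x q₁ q hqfin (by rw [hq1, hq2]) hbtwq
        rw [hp₁1] at hwp₁
        rw [hq₁1] at hwq₁
        have hpq₁ : p₁ = q₁ :=
          unique_ext_small hgeo hnb w x hfin δ le_rfl p₁ q₁ hp₁1 hwp₁ hq₁1 hwq₁
        subst hpq₁
        have hδ0' : δ ≠ 0 := by simpa [hδ] using hwx
        have hxp₁ : x ≠ p₁ := by
          intro h; apply hδ0'; rw [← hp₁1, ← h, edist_self]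
        have hsub : a - δ ≠ ⊤ := ne_top_of_le_ne_top hane tsub_le_self
        have hn' : a - δ ≤ (n : ℝ≥0∞) * edist x p₁ := by
          rw [hp₁1, tsub_le_iff_right]
          calc a ≤ (n + 1 : ℕ) * δ := hn
          _ = (n : ℝ≥0∞) * δ + δ := by push_cast; ring
        refine ih x p₁ hxp₁ (by rw [hp₁1]; exact hδx) (a - δ) hsub p q ?_ ?_ ?_ ?_ hn'
        · rw [hp₁2, hp1]
        · rw [hp1, hp₁1]; exact (add_tsub_cancel_of_le hsmall.le).symm
        · rw [hq₁2, hq1]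
        · rw [hq1, hp₁1]; exact (add_tsub_cancel_of_le hsmall.le).symm

lemma cancel_le {c α β : ℝ≥0∞} (hc : c ≠ ⊤) (h : c + α ≤ c + β) : α ≤ β :=
  (ENNReal.add_le_add_iff_left hc).1 h

end Aux

/-- In a non-branching geodesic space, if `x` is an interior point of a transport ray of
a `d_L`-cyclically monotone set `G` of aligned pairs (i.e. `(w,x), (x,z) ∈ G` with
`w ≠ x ≠ z`), then all the geodesics issued from or arriving at `x` used by `G` lie on
the image of a single geodesic: the set `R(x)` of points lying on a geodesic between `x`
and some `y` with `(x,y) ∈ G`, or between some `y` and `x` with `(y,x) ∈ G`, is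
contained in the image of a single unit-speed geodesic. -/
theorem stmt18 {X : Type*} [EMetricSpace X]
    -- geodesic space: points at finite distance are joined by constant-speed geodesics
    (hgeo : ∀ x y : X, edist x y < ⊤ → ∃ γ : ℝ → X, γ 0 = x ∧ γ 1 = y ∧
      ∀ s ∈ Set.Icc (0 : ℝ) 1, ∀ t ∈ Set.Icc (0 : ℝ) 1,
        edist (γ s) (γ t) = ENNReal.ofReal |s - t| * edist x y)
    -- non-branching, in the metric form: for `d_L(x,y) = r/2` the set
    -- `{z : d_L(x,z) = r} ∩ {z : d_L(y,z) = r/2}` is a singleton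
    (hnb : ∀ (x y : X) (r : ℝ≥0∞), r ≠ ⊤ → edist x y = r / 2 →
      ∃! z : X, edist x z = r ∧ edist y z = r / 2)
    (G : Set (X × X)) (hG : IsCyclicallyMonotone (fun x y => edist x y) G)
    (hGfin : ∀ p ∈ G, edist p.1 p.2 < ⊤)
    (x w z : X) (hwx : (w, x) ∈ G) (hxz : (x, z) ∈ G) (hw : w ≠ x) (hz : x ≠ z) :
    ∃ (I : Set ℝ) (γ : ℝ → X),
      (∀ s ∈ I, ∀ t ∈ I, edist (γ s) (γ t) = ENNReal.ofReal |s - t|) ∧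
      {p : X | (∃ y, (x, y) ∈ G ∧ edist x p + edist p y = edist x y) ∨
               (∃ y, (y, x) ∈ G ∧ edist y p + edist p x = edist y x)} ⊆ γ '' I := by
  classical
  have cyc2 : ∀ a b c d : X, (a, b) ∈ G → (c, d) ∈ G →
      edist a b + edist c d ≤ edist a d + edist c b := by
    intro a b c d hab hcd
    have := hG 1 ![(a, b), (c, d)] (by intro i; fin_cases i <;> simpa)
    simpa [Fin.sum_univ_two, add_comm] using this
  have hwxfin : edist w x ≠ ⊤ := (hGfin _ hwx).ne
  have hxzfin : edist x z ≠ ⊤ := (hGfin _ hxz).ne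
  -- the "forward" and "backward" conditions
  set F : X → Prop := fun p => ∃ y, (x, y) ∈ G ∧ edist x p + edist p y = edist x y with hFdef
  set B : X → Prop := fun p => ∃ y, (y, x) ∈ G ∧ edist y p + edist p x = edist y x with hBdef
  -- alignment of `x` inside rays
  have key1 : ∀ y, (x, y) ∈ G → edist w x + edist x y = edist w y := by
    intro y hy
    refine le_antisymm ?_ (edist_triangle _ _ _)
    have h := cyc2 w x x y hwx hy
    simpa using h
  have key2 : ∀ y, (y, x) ∈ G → edist y x + edist x z = edist y z := by
    intro y hy
    refine le_antisymm ?_ (edist_triangle _ _ _)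
    have h := cyc2 y x x z hy hxz
    simpa using h
  have key3 : ∀ y y', (y, x) ∈ G → (x, y') ∈ G → edist y x + edist x y' = edist y y' := by
    intro y y' hy hy'
    refine le_antisymm ?_ (edist_triangle _ _ _)
    have h := cyc2 y x x y' hy hy'
    simpa using h
  -- forward points: aligned with w behind x
  have hF : ∀ p, F p → edist w p = edist w x + edist x p ∧ edist x p ≠ ⊤ := by
    intro p ⟨y, hy, hbtw⟩
    have h1 := key1 y hy
    have hfiny : edist w y ≠ ⊤ := by
      rw [← h1]; exact ENNReal.add_ne_top.2 ⟨hwxfin, (hGfin _ hy).ne⟩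
    obtain ⟨h2, _⟩ := align_trans w x p y hfiny h1 hbtw
    exact ⟨h2, ne_top_of_le_ne_top (hGfin _ hy).ne (le_self_add.trans hbtw.le)⟩
  -- backward points: aligned with z ahead of x
  have hB : ∀ p, B p → edist z p = edist z x + edist x p ∧ edist x p ≠ ⊤ := by
    intro p ⟨y, hy, hbtw⟩
    have h1 : edist z x + edist x y = edist z y := by
      have := key2 y hy
      rw [edist_comm z x, edist_comm z y, edist_comm y x] at *
      rw [add_comm]
      exact this
    have hfiny : edist z y ≠ ⊤ := by
      rw [← h1]
      exact ENNReal.add_ne_top.2 ⟨by rw [edist_comm]; exact hxzfin,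
        by rw [edist_comm]; exact (hGfin _ hy).ne⟩
    have hbtw' : edist x p + edist p y = edist x y := by
      rw [edist_comm x p, edist_comm p y, edist_comm x y, add_comm]
      exact hbtw
    obtain ⟨h2, _⟩ := align_trans z x p y hfiny h1 hbtw'
    exact ⟨h2, ne_top_of_le_ne_top (show edist x y ≠ ⊤ by
      rw [edist_comm]; exact (hGfin _ hy).ne) (le_self_add.trans hbtw'.le)⟩
  -- forward-forward rigidity
  have hFF : ∀ p q, F p → F q → edist x p ≤ edist x q →
      edist p q = edist x q - edist x p := by
    intro p q hp hq hle
    obtain ⟨hap, hafin⟩ := hF p hp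
    obtain ⟨haq, hbfin⟩ := hF q hq
    obtain ⟨q', hq'1, hq'2⟩ := exists_mid hgeo x q hbfin (edist x p) hle
    have hbtw : edist x q' + edist q' q = edist x q := by
      rw [hq'1, hq'2]; exact add_tsub_cancel_of_le hle
    have hqfin : edist w q ≠ ⊤ := by
      rw [haq]; exact ENNReal.add_ne_top.2 ⟨hwxfin, hbfin⟩
    obtain ⟨hq'w, _⟩ := align_trans w x q' q hqfin haq.symm hbtw
    rw [hq'1] at hq'w
    have : p = q' := unique_ext hgeo hnb w x hw hwxfin (edist x p) hafin p q'
      rfl hap hq'1 hq'w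
    rw [this, hq'1]; exact hq'2
  -- backward-backward rigidity
  have hBB : ∀ p q, B p → B q → edist x p ≤ edist x q →
      edist p q = edist x q - edist x p := by
    intro p q hp hq hle
    obtain ⟨hap, hafin⟩ := hB p hp
    obtain ⟨haq, hbfin⟩ := hB q hq
    obtain ⟨q', hq'1, hq'2⟩ := exists_mid hgeo x q hbfin (edist x p) hle
    have hbtw : edist x q' + edist q' q = edist x q := by
      rw [hq'1, hq'2]; exact add_tsub_cancel_of_le hle
    have hzxfin : edist z x ≠ ⊤ := by rwa [edist_comm]
    have hqfin : edist z q ≠ ⊤ := by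
      rw [haq]; exact ENNReal.add_ne_top.2 ⟨hzxfin, hbfin⟩
    obtain ⟨hq'z, _⟩ := align_trans z x q' q hqfin haq.symm hbtw
    rw [hq'1] at hq'z
    have : p = q' := unique_ext hgeo hnb z x (Ne.symm hz) hzxfin (edist x p) hafin p q'
      rfl hap hq'1 hq'z
    rw [this, hq'1]; exact hq'2
  -- forward-backward rigidity
  have hFB : ∀ p q, F p → B q → edist q p = edist x q + edist x p := by
    intro p q ⟨y', hy', hbtwp⟩ ⟨y, hy, hbtwq⟩
    have h3 := key3 y y' hy hy'
    have hyq : edist y q ≠ ⊤ := ne_top_of_le_ne_top (hGfin _ hy).ne (le_self_add.trans hbtwq.le)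
    have hpy' : edist p y' ≠ ⊤ := by
      refine ne_top_of_le_ne_top (hGfin _ hy').ne ?_
      calc edist p y' ≤ edist x p + edist p y' := le_add_self
      _ = edist x y' := hbtwp
    have e1 : edist y q + (edist q x + edist x p) + edist p y' = edist y y' := by
      rw [← h3, ← hbtwq, ← hbtwp]; ring
    have e2 : edist y y' ≤ edist y q + edist q p + edist p y' := by
      calc edist y y' ≤ edist y q + edist q y' := edist_triangle _ _ _
      _ ≤ edist y q + (edist q p + edist p y') := by gcongr; exact edist_triangle _ _ _
      _ = _ := by ring
    have e3 : edist y q + edist q p + edist p y' ≤ edist y q + (edist q x + edist x p) + edist p y' := by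
      gcongr
      exact edist_triangle _ _ _
    have e4 : edist y q + edist q p + edist p y' = edist y q + (edist q x + edist x p) + edist p y' :=
      le_antisymm e3 (by rw [e1]; exact e2)
    have e5 : edist q p = edist q x + edist x p := by
      have h5 : edist y q + (edist q p + edist p y') = edist y q + ((edist q x + edist x p) + edist p y') := by
        rw [← add_assoc, e4]; ring
      have h6 := (ENNReal.add_right_inj hyq).1 h5
      have h7 : edist q p + edist p y' = (edist q x + edist x p) + edist p y' := h6
      have h8 : edist p y' + edist q p = edist p y' + (edist q x + edist x p) := by
        rw [add_comm (edist p y'), add_comm (edist p y')]; exact h7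
      exact (ENNReal.add_right_inj hpy').1 h8
    rw [e5, edist_comm q x]
  -- helper for real/ennreal conversion
  have habs_sub : ∀ a b : ℝ≥0∞, a ≠ ⊤ → b ≠ ⊤ → a ≤ b →
      ENNReal.ofReal |a.toReal - b.toReal| = b - a := by
    intro a b ha hb h
    rw [abs_sub_comm, abs_of_nonneg (sub_nonneg.2 (ENNReal.toReal_mono hb h)),
      ENNReal.ofReal_sub _ ENNReal.toReal_nonneg, ENNReal.ofReal_toReal hb,
      ENNReal.ofReal_toReal ha]
  have habs_add : ∀ a b : ℝ≥0∞, a ≠ ⊤ → b ≠ ⊤ →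
      ENNReal.ofReal |a.toReal - -b.toReal| = a + b := by
    intro a b ha hb
    rw [sub_neg_eq_add, abs_of_nonneg (by positivity),
      ENNReal.ofReal_add ENNReal.toReal_nonneg ENNReal.toReal_nonneg,
      ENNReal.ofReal_toReal ha, ENNReal.ofReal_toReal hb]
  set f : X → ℝ := fun p => if F p then (edist x p).toReal else -(edist x p).toReal
    with hfdef
  have hfF : ∀ p, F p → f p = (edist x p).toReal := fun p hp => by
    simp only [hfdef, if_pos hp]
  have hfB : ∀ p, ¬F p → f p = -(edist x p).toReal := fun p hp => by
    simp only [hfdef, if_neg hp]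
  -- the key isometry property
  have hK : ∀ p q, (F p ∨ B p) → (F q ∨ B q) → edist p q = ENNReal.ofReal |f p - f q| := by
    have main : ∀ p q, (F p ∨ B p) → (F q ∨ B q) → edist x p ≤ edist x q →
        edist p q = ENNReal.ofReal |f p - f q| := by
      intro p q hp hq hle
      by_cases hpF : F p <;> by_cases hqF : F q
      · rw [hfF p hpF, hfF q hqF, habs_sub _ _ (hF p hpF).2 (hF q hqF).2 hle]
        exact hFF p q hpF hqF hle
      · have hqB : B q := hq.resolve_left hqF
        rw [hfF p hpF, hfB q hqF, habs_add _ _ (hF p hpF).2 (hB q hqB).2]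
        rw [edist_comm p q, hFB p q hpF hqB, add_comm]
      · have hpB : B p := hp.resolve_left hpF
        rw [hfB p hpF, hfF q hqF, abs_sub_comm, habs_add _ _ (hF q hqF).2 (hB p hpB).2,
          hFB q p hqF hpB, add_comm]
      · have hpB : B p := hp.resolve_left hpF
        have hqB : B q := hq.resolve_left hqF
        rw [hfB p hpF, hfB q hqF,
          show -(edist x p).toReal - -(edist x q).toReal
            = (edist x q).toReal - (edist x p).toReal by ring,
          abs_sub_comm, habs_sub _ _ (hB p hpB).2 (hB q hqB).2 hle]
        exact hBB p q hpB hqB hle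
    intro p q hp hq
    rcases le_total (edist x p) (edist x q) with h | h
    · exact main p q hp hq h
    · rw [edist_comm, abs_sub_comm]
      exact main q p hq hp h
  refine ⟨f '' {p : X | F p ∨ B p},
    fun s => if h : ∃ p, (F p ∨ B p) ∧ f p = s then h.choose else x, ?_, ?_⟩
  · rintro s ⟨p, hp, rfl⟩ t ⟨q, hq, rfl⟩
    have hs : ∃ r, (F r ∨ B r) ∧ f r = f p := ⟨p, hp, rfl⟩
    have ht : ∃ r, (F r ∨ B r) ∧ f r = f q := ⟨q, hq, rfl⟩
    simp only
    rw [dif_pos hs, dif_pos ht]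
    obtain ⟨hs1, hs2⟩ := hs.choose_spec
    obtain ⟨ht1, ht2⟩ := ht.choose_spec
    rw [hK _ _ hs1 ht1, hs2, ht2]
  · rintro p hp
    refine ⟨f p, ⟨p, hp, rfl⟩, ?_⟩
    have hs : ∃ r, (F r ∨ B r) ∧ f r = f p := ⟨p, hp, rfl⟩
    simp only
    rw [dif_pos hs]
    obtain ⟨hs1, hs2⟩ := hs.choose_spec
    have h0 := hK _ _ hs1 hp
    rw [hs2, sub_self, abs_zero, ENNReal.ofReal_zero] at h0
    exact edist_eq_zero.1 h0
end
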